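/- Assume additionally ‖Φ(x)‖² ≤ K for all x ∈ X. Let Q₀ be a probability measure on X, θ ≥ 0, and let 𝒫₀ be the MMD uncertainty set of radius θ centered at Q₀. Fix α ∈ (0,1] and set γₙ = √(2K/n)·(1 + √(log(1/α))). Then for every n and every P₀ ∈ 𝒫₀, the P₀^{⊗n}-probability of the event inf over P ∈ 𝒫₀ of ‖(1/n)∑ᵢ Φ(xᵢ) − μ_P‖_H > γₙ is at most α; i.e., the robust kernel test that rejects when the empirical embedding is at MMD distance more than γₙ from 𝒫₀ has worst-case false alarm probability at most α. -/

import Mathlib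

open MeasureTheory
open scoped ENNReal

section Auxiliary

open Real

/-- Core analytic inequality for Hoeffding's lemma. -/
lemma hoeff_core (p : ℝ) (hp0 : 0 ≤ p) (hp1 : p ≤ 1) :
    ∀ u : ℝ, 0 ≤ u → Real.log (1 - p + p * Real.exp u) ≤ p * u + u ^ 2 / 8 := by
  -- N u := 1 - p + p * exp u
  set N : ℝ → ℝ := fun u => 1 - p + p * Real.exp u with hN
  have hNpos : ∀ u : ℝ, 0 ≤ u → 0 < N u := by
    intro u hu
    have : (1:ℝ) ≤ Real.exp u := Real.one_le_exp hu
    simp only [hN]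
    nlinarith [Real.exp_pos u]
  set G : ℝ → ℝ := fun u => p + u / 4 - p * Real.exp u / N u with hG
  have hNder : ∀ u, HasDerivAt N (p * Real.exp u) u := by
    intro u
    exact ((Real.hasDerivAt_exp u).const_mul p).const_add (1 - p)
  -- G has nonneg derivative on interior (Ioi 0), so G monotone on Ici 0
  have hGder : ∀ u : ℝ, 0 ≤ u →
      HasDerivAt G (1 / 4 - p * Real.exp u * (1 - p) / (N u) ^ 2) u := by
    intro u hu
    have hN0 : N u ≠ 0 := (hNpos u hu).ne'
    have h1 : HasDerivAt (fun u => p * Real.exp u) (p * Real.exp u) u :=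
      (Real.hasDerivAt_exp u).const_mul p
    have h2 : HasDerivAt (fun u => p * Real.exp u / N u)
        ((p * Real.exp u * N u - p * Real.exp u * (p * Real.exp u)) / (N u) ^ 2) u :=
      h1.div (hNder u) hN0
    have h3 : HasDerivAt (fun u : ℝ => p + u / 4) (1 / 4) u := by
      simpa using ((hasDerivAt_id u).div_const 4).const_add p
    have heq : (p * Real.exp u * N u - p * Real.exp u * (p * Real.exp u)) / (N u) ^ 2
        = p * Real.exp u * (1 - p) / (N u) ^ 2 := by
      congr 1
      simp only [hN]; ring
    rw [heq] at h2
    exact h3.sub h2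
  have hG'nonneg : ∀ u : ℝ, 0 ≤ u → 0 ≤ 1 / 4 - p * Real.exp u * (1 - p) / (N u) ^ 2 := by
    intro u hu
    have hNp := hNpos u hu
    rw [sub_nonneg, div_le_iff₀ (by positivity)]
    have : N u = 1 - p + p * Real.exp u := rfl
    nlinarith [sq_nonneg (1 - p - p * Real.exp u), Real.exp_pos u]
  have hGcont : ContinuousOn G (Set.Ici 0) := by
    intro u hu
    exact ((hGder u hu).continuousAt).continuousWithinAt
  have hGmono : MonotoneOn G (Set.Ici 0) := by
    apply monotoneOn_of_hasDerivWithinAt_nonneg (convex_Ici 0) hGcont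
      (f' := fun u => 1 / 4 - p * Real.exp u * (1 - p) / (N u) ^ 2)
    · intro u hu
      rw [interior_Ici] at hu
      exact (hGder u hu.le).hasDerivWithinAt
    · intro u hu
      rw [interior_Ici] at hu
      exact hG'nonneg u hu.le
  have hG0 : G 0 = 0 := by simp [hG, hN]
  have hGnonneg : ∀ u : ℝ, 0 ≤ u → 0 ≤ G u := by
    intro u hu
    rw [← hG0]
    exact hGmono Set.self_mem_Ici hu hu
  set F : ℝ → ℝ := fun u => p * u + u ^ 2 / 8 - Real.log (N u) with hF
  have hFder : ∀ u : ℝ, 0 ≤ u → HasDerivAt F (G u) u := by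
    intro u hu
    have hN0 : N u ≠ 0 := (hNpos u hu).ne'
    have h1 : HasDerivAt (fun u => Real.log (N u)) (p * Real.exp u / N u) u := by
      have := (Real.hasDerivAt_log hN0).comp u (hNder u)
      rw [div_eq_inv_mul]; exact this
    have h2 : HasDerivAt (fun u : ℝ => p * u + u ^ 2 / 8) (p + u / 4) u := by
      have ha : HasDerivAt (fun u : ℝ => p * u) p u := by
        simpa using (hasDerivAt_id u).const_mul p
      have hb : HasDerivAt (fun u : ℝ => u ^ 2 / 8) (u / 4) u := by
        have := (hasDerivAt_pow 2 u).div_const 8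
        refine this.congr_deriv ?_
        ring
      exact ha.add hb
    have h3 := h2.sub h1
    have : p + u / 4 - p * Real.exp u / N u = G u := rfl
    rw [this] at h3
    exact h3
  have hFcont : ContinuousOn F (Set.Ici 0) := fun u hu =>
    ((hFder u hu).continuousAt).continuousWithinAt
  have hFmono : MonotoneOn F (Set.Ici 0) := by
    apply monotoneOn_of_hasDerivWithinAt_nonneg (convex_Ici 0) hFcont (f' := G)
    · intro u hu
      rw [interior_Ici] at hu
      exact (hFder u hu.le).hasDerivWithinAt
    · intro u hu
      rw [interior_Ici] at hu
      exact hGnonneg u hu.le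
  have hF0 : F 0 = 0 := by simp [hF, hN]
  intro u hu
  have : 0 ≤ F u := by
    rw [← hF0]
    exact hFmono Set.self_mem_Ici hu hu
  simp only [hF, hN] at this ⊢
  linarith

lemma hoeff_scalar {a b : ℝ} (ha : a ≤ 0) (hb : 0 ≤ b) (hab : a < b)
    (hcore : ∀ p : ℝ, 0 ≤ p → p ≤ 1 → ∀ u : ℝ, 0 ≤ u →
      Real.log (1 - p + p * Real.exp u) ≤ p * u + u ^ 2 / 8) :
    (b * Real.exp a - a * Real.exp b) / (b - a) ≤ Real.exp ((b - a) ^ 2 / 8) := by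
  have hu : (0:ℝ) < b - a := sub_pos.2 hab
  set u : ℝ := b - a with hudef
  set p : ℝ := -a / u with hpdef
  have hp0 : 0 ≤ p := div_nonneg (neg_nonneg.2 ha) hu.le
  have hp1 : p ≤ 1 := by
    rw [hpdef, div_le_one hu]
    linarith
  have hX : Real.log (1 - p + p * Real.exp u) ≤ p * u + u ^ 2 / 8 :=
    hcore p hp0 hp1 u hu.le
  have hXpos : (0:ℝ) < 1 - p + p * Real.exp u := by
    nlinarith [Real.one_le_exp hu.le]
  have hXle : 1 - p + p * Real.exp u ≤ Real.exp (p * u + u ^ 2 / 8) := by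
    calc 1 - p + p * Real.exp u = Real.exp (Real.log (1 - p + p * Real.exp u)) :=
          (Real.exp_log hXpos).symm
      _ ≤ _ := Real.exp_le_exp.2 hX
  have hpu : p * u = -a := by
    rw [hpdef]; field_simp
  have key : (b * Real.exp a - a * Real.exp b) / (b - a)
      = Real.exp (-(p * u)) * (1 - p + p * Real.exp u) := by
    have h1 : Real.exp (-(p * u)) = Real.exp a := by rw [hpu, neg_neg]
    have hexp : Real.exp a * Real.exp u = Real.exp b := by
      rw [← Real.exp_add]; congr 1; rw [hudef]; ring
    have h1p : 1 - p = b / u := by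
      rw [hpdef, hudef]; field_simp [(sub_pos.2 hab).ne']; ring
    rw [h1, h1p, hpdef, ← hexp, ← hudef]
    field_simp
    ring
  rw [key]
  calc Real.exp (-(p * u)) * (1 - p + p * Real.exp u)
      ≤ Real.exp (-(p * u)) * Real.exp (p * u + u ^ 2 / 8) := by
        exact mul_le_mul_of_nonneg_left hXle (Real.exp_nonneg _)
    _ = Real.exp (u ^ 2 / 8) := by rw [← Real.exp_add]; ring_nf

lemma integrable_of_bound'' {Y E : Type*} [MeasurableSpace Y] [NormedAddCommGroup E]
    (μ : Measure Y) [IsFiniteMeasure μ]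
    (g : Y → E) (hg : AEStronglyMeasurable g μ) (B : ℝ) (hB : ∀ y, ‖g y‖ ≤ B) :
    Integrable g μ :=
  (integrable_const B).mono' hg (Filter.Eventually.of_forall hB)

lemma sq_int_le {Y : Type*} [MeasurableSpace Y] (μ : Measure Y) [IsProbabilityMeasure μ]
    (f : Y → ℝ) (hf : Integrable f μ) (hf2 : Integrable (fun y => f y ^ 2) μ) :
    (∫ y, f y ∂μ) ^ 2 ≤ ∫ y, f y ^ 2 ∂μ := by
  set m := ∫ y, f y ∂μ with hm
  have h0 : (0:ℝ) ≤ ∫ y, (f y - m) ^ 2 ∂μ := integral_nonneg fun y => sq_nonneg _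
  have hexp : ∀ y, (f y - m) ^ 2 = (f y ^ 2 - 2 * m * f y) + m ^ 2 := fun y => by ring
  rw [integral_congr_ae (Filter.Eventually.of_forall hexp)] at h0
  rw [integral_add (f := fun y => f y ^ 2 - 2 * m * f y) (g := fun _ => m ^ 2)
    (hf2.sub (hf.const_mul (2 * m))) (integrable_const _),
    integral_sub hf2 (hf.const_mul (2 * m)), integral_const_mul, integral_const] at h0
  simp only [measure_univ, probReal_univ, smul_eq_mul, one_mul, ← hm] at h0
  nlinarith [h0]

/-- Hoeffding's lemma, integral form. -/
lemma hoeff_mgf {Y : Type*} [MeasurableSpace Y] (μ : Measure Y) [IsProbabilityMeasure μ]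
    (g : Y → ℝ) (hg : AEStronglyMeasurable g μ) (a b : ℝ) (hab : ∀ y, g y ∈ Set.Icc a b)
    (h0 : ∫ y, g y ∂μ = 0) :
    ∫ y, Real.exp (g y) ∂μ ≤ Real.exp ((b - a) ^ 2 / 8) := by
  have hgint : Integrable g μ := by
    refine (integrable_const (max |a| |b|)).mono' hg ?_
    refine Filter.Eventually.of_forall fun y => ?_
    have h := hab y
    rw [Real.norm_eq_abs, abs_le]
    constructor
    · calc -max |a| |b| ≤ -|a| := by simp
        _ ≤ a := neg_abs_le a
        _ ≤ g y := h.1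
    · calc g y ≤ b := h.2
        _ ≤ |b| := le_abs_self b
        _ ≤ max |a| |b| := le_max_right _ _
  have hexpint : Integrable (fun y => Real.exp (g y)) μ := by
    refine (integrable_const (Real.exp b)).mono' (Real.continuous_exp.comp_aestronglyMeasurable hg) ?_
    exact Filter.Eventually.of_forall fun y => by
      rw [Real.norm_eq_abs, abs_of_pos (Real.exp_pos _)]
      exact Real.exp_le_exp.2 (hab y).2
  have ha0 : a ≤ 0 := by
    have h := integral_mono (μ := μ) (integrable_const a) hgint fun y => (hab y).1
    simpa [h0] using h
  have hb0 : 0 ≤ b := by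
    have h := integral_mono (μ := μ) hgint (integrable_const b) fun y => (hab y).2
    simpa [h0] using h
  rcases eq_or_lt_of_le (le_trans ha0 hb0) with heq | hlt
  · -- a = 0 = b, g ≡ 0
    have ha' : a = 0 := le_antisymm ha0 (heq ▸ hb0)
    have hb' : b = 0 := by rw [← heq, ha']
    have hg0 : ∀ y, g y = 0 := fun y => le_antisymm
      (hb' ▸ (hab y).2) (ha' ▸ (hab y).1)
    simp only [hg0, Real.exp_zero, integral_const, measure_univ, probReal_univ, smul_eq_mul,
      mul_one]
    exact Real.one_le_exp (by positivity)
  · -- a < b (note a ≤ 0 ≤ b so a < b here)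
    have hba : (0:ℝ) < b - a := by linarith
    set c0 : ℝ := (b * Real.exp a - a * Real.exp b) / (b - a) with hc0
    set c1 : ℝ := (Real.exp b - Real.exp a) / (b - a) with hc1
    have hpt : ∀ y, Real.exp (g y) ≤ c0 + c1 * g y := by
      intro y
      obtain ⟨h1, h2⟩ := hab y
      have w1 : (0:ℝ) ≤ (b - g y) / (b - a) := div_nonneg (by linarith) hba.le
      have w2 : (0:ℝ) ≤ (g y - a) / (b - a) := div_nonneg (by linarith) hba.le
      have w3 : (b - g y) / (b - a) + (g y - a) / (b - a) = 1 := by field_simp; ring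
      have hconv := convexOn_exp.2 (Set.mem_univ a) (Set.mem_univ b) w1 w2 w3
      simp only [smul_eq_mul] at hconv
      have harg : (b - g y) / (b - a) * a + (g y - a) / (b - a) * b = g y := by
        field_simp
        ring
      rw [harg] at hconv
      refine hconv.trans (le_of_eq ?_)
      rw [hc0, hc1]
      field_simp
      ring
    calc ∫ y, Real.exp (g y) ∂μ ≤ ∫ y, (c0 + c1 * g y) ∂μ :=
          integral_mono hexpint ((integrable_const c0).add (hgint.const_mul c1)) hpt
      _ = c0 := by
          rw [integral_add (integrable_const c0) (hgint.const_mul c1), integral_const,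
            integral_const_mul, h0]
          simp
      _ ≤ Real.exp ((b - a) ^ 2 / 8) := hoeff_scalar ha0 hb0 hlt hoeff_core

/-- helper: integrability of bounded measurable functions on probability (finite) spaces -/
lemma integrable_of_bound {Y : Type*} [MeasurableSpace Y] (μ : Measure Y) [IsFiniteMeasure μ]
    (g : Y → ℝ) (hg : AEStronglyMeasurable g μ) (B : ℝ) (hB : ∀ y, |g y| ≤ B) :
    Integrable g μ :=
  (integrable_const B).mono' hg (Filter.Eventually.of_forall fun y => by
    simpa [Real.norm_eq_abs] using hB y)

/-- McDiarmid-type MGF bound for iid product measures. -/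
lemma mcdiarmid_mgf {X : Type*} [MeasurableSpace X] [Nonempty X] :
    ∀ (n : ℕ) (P : Measure X) (_ : IsProbabilityMeasure P)
      (f : (Fin n → X) → ℝ) (_ : Measurable f)
      (B : ℝ) (_ : ∀ xs, |f xs| ≤ B)
      (d : ℝ) (_ : 0 ≤ d)
      (_ : ∀ (xs : Fin n → X) (i : Fin n) (y y' : X),
        f (Function.update xs i y) - f (Function.update xs i y') ≤ d),
    ∫ xs, Real.exp (f xs) ∂(Measure.pi fun _ : Fin n => P)
      ≤ Real.exp ((∫ xs, f xs ∂(Measure.pi fun _ : Fin n => P)) + n * (d ^ 2 / 8)) := by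
  intro n
  induction n with
  | zero =>
    intro P hP f hf B hB d hd hdiff
    haveI := hP
    have hfc : f = fun _ => f default := funext fun xs => by rw [Subsingleton.elim xs default]
    rw [hfc]
    simp [integral_const]
  | succ n ih =>
    intro P hP f hf B hB d hd hdiff
    haveI := hP
    set Pn : Measure (Fin n → X) := Measure.pi fun _ : Fin n => P with hPn
    set Pm : Measure (Fin (n+1) → X) := Measure.pi fun _ : Fin (n+1) => P with hPm
    haveI : IsProbabilityMeasure Pn := by infer_instance
    haveI : IsProbabilityMeasure Pm := by infer_instance
    set e := MeasurableEquiv.piFinSuccAbove (fun _ : Fin (n+1) => X) 0 with he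
    have hmp : MeasurePreserving e Pm (P.prod Pn) :=
      measurePreserving_piFinSuccAbove (fun _ : Fin (n+1) => P) 0
    have hcons : ∀ (y : X) (zs : Fin n → X), e.symm (y, zs) = Fin.cons y zs := by
      intro y zs
      show (Fin.insertNthEquiv (fun _ : Fin (n+1) => X) 0) (y, zs) = Fin.cons y zs
      simp [Fin.insertNthEquiv, Fin.insertNth_zero']
    -- the function on the product space
    set F : X × (Fin n → X) → ℝ := fun q => f (Fin.cons q.1 q.2) with hF
    have hconsm : Measurable fun q : X × (Fin n → X) => (Fin.cons q.1 q.2 : Fin (n+1) → X) := by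
      rw [measurable_pi_iff]
      intro j
      refine Fin.cases ?_ ?_ j
      · simpa using measurable_fst
      · intro i
        simp only [Fin.cons_succ]; exact (measurable_pi_apply i).comp measurable_snd
    have hFm : Measurable F := hf.comp hconsm
    have hFb : ∀ q, |F q| ≤ B := fun q => hB _
    have hFint : Integrable F (P.prod Pn) :=
      integrable_of_bound _ F hFm.aestronglyMeasurable B hFb
    have hexpFint : Integrable (fun q => Real.exp (F q)) (P.prod Pn) :=
      integrable_of_bound _ _ (Real.continuous_exp.measurable.comp hFm).aestronglyMeasurable
        (Real.exp B) (fun q => by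
          rw [abs_of_pos (Real.exp_pos _)]
          exact Real.exp_le_exp.2 ((abs_le.1 (hFb q)).2))
    -- transfer integrals to the product space
    have htrans : ∀ (G : (Fin (n+1) → X) → ℝ),
        ∫ xs, G xs ∂Pm = ∫ q, G (Fin.cons q.1 q.2) ∂(P.prod Pn) := by
      intro G
      have h1 := (MeasurePreserving.symm e hmp).integral_comp e.symm.measurableEmbedding G
      rw [← h1]
      refine integral_congr_ae (Filter.Eventually.of_forall fun q => ?_)
      simp only [hcons]
    -- conditional mean
    set h : (Fin n → X) → ℝ := fun zs => ∫ y, F (y, zs) ∂P with hh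
    have hFsm : StronglyMeasurable F := hFm.stronglyMeasurable
    have hhsm : StronglyMeasurable h := hFsm.integral_prod_left'
    have hsecint : ∀ zs, Integrable (fun y => F (y, zs)) P := fun zs =>
      integrable_of_bound _ _
        ((hFm.comp (measurable_id.prodMk measurable_const)).aestronglyMeasurable) B
        (fun y => hFb _)
    have hhb : ∀ zs, |h zs| ≤ B := by
      intro zs
      have hBnn : 0 ≤ B := le_trans (abs_nonneg _) (hFb (Classical.arbitrary X, zs))
      have h2 := norm_integral_le_of_norm_le_const (μ := P)
        (f := fun y : X => F (y, zs)) (C := B)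
        (Filter.Eventually.of_forall fun y : X => by
          simpa [Real.norm_eq_abs] using hFb (y, zs))
      simpa [Real.norm_eq_abs, measure_univ] using h2
    have hinner : ∀ zs, ∫ y, Real.exp (F (y, zs)) ∂P
        ≤ Real.exp (h zs) * Real.exp (d ^ 2 / 8) := by
      intro zs
      set a : ℝ := (⨅ y : X, F (y, zs)) - h zs with ha
      have hbdd : BddBelow (Set.range fun y : X => F (y, zs)) :=
        ⟨-B, by rintro _ ⟨y, rfl⟩; linarith [(abs_le.1 (hFb (y, zs))).1]⟩
      have hmem : ∀ y, (F (y, zs) - h zs) ∈ Set.Icc a (a + d) := by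
        intro y
        constructor
        · have hle := ciInf_le hbdd y
          rw [ha]
          simp only [sub_le_sub_iff_right]
          linarith
        · have hle : F (y, zs) - d ≤ ⨅ y' : X, F (y', zs) := by
            refine le_ciInf fun y' => ?_
            have hgoal := hdiff (Fin.cons y zs) 0 y y'
            rw [Fin.update_cons_zero, Fin.update_cons_zero] at hgoal
            simp only [hF] at *
            linarith
          rw [ha]
          linarith
      have hmean : ∫ y, (F (y, zs) - h zs) ∂P = 0 := by
        rw [integral_sub (hsecint zs) (integrable_const _), integral_const]
        simp [hh]
      have hmgf := hoeff_mgf P (fun y => F (y, zs) - h zs)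
        ((hsecint zs).aestronglyMeasurable.sub aestronglyMeasurable_const) a (a + d) hmem hmean
      have had : a + d - a = d := by ring
      rw [had] at hmgf
      calc ∫ y, Real.exp (F (y, zs)) ∂P
          = ∫ y, Real.exp (h zs) * Real.exp (F (y, zs) - h zs) ∂P := by
            refine integral_congr_ae (Filter.Eventually.of_forall fun y => ?_)
            show Real.exp (F (y, zs)) = Real.exp (h zs) * Real.exp (F (y, zs) - h zs)
            rw [← Real.exp_add]
            congr 1
            ring
        _ = Real.exp (h zs) * ∫ y, Real.exp (F (y, zs) - h zs) ∂P := integral_const_mul _ _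
        _ ≤ Real.exp (h zs) * Real.exp (d ^ 2 / 8) :=
            mul_le_mul_of_nonneg_left hmgf (Real.exp_nonneg _)
    have hIexp : Integrable (fun zs => ∫ y, Real.exp (F (y, zs)) ∂P) Pn :=
      hexpFint.integral_prod_right
    have hexphint : Integrable (fun zs => Real.exp (h zs)) Pn :=
      integrable_of_bound Pn _
        (Real.continuous_exp.comp_aestronglyMeasurable hhsm.aestronglyMeasurable)
        (Real.exp B) (fun zs => by
          rw [abs_of_pos (Real.exp_pos _)]
          exact Real.exp_le_exp.2 (abs_le.1 (hhb zs)).2)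
    have hstep : ∫ xs, Real.exp (f xs) ∂Pm
        ≤ Real.exp (d ^ 2 / 8) * ∫ zs, Real.exp (h zs) ∂Pn := by
      rw [htrans (fun xs => Real.exp (f xs))]
      calc ∫ q, Real.exp (f (Fin.cons q.1 q.2)) ∂(P.prod Pn)
          = ∫ zs, ∫ y, Real.exp (F (y, zs)) ∂P ∂Pn := integral_prod_symm _ hexpFint
        _ ≤ ∫ zs, Real.exp (h zs) * Real.exp (d ^ 2 / 8) ∂Pn :=
            integral_mono hIexp (hexphint.mul_const _) hinner
        _ = Real.exp (d ^ 2 / 8) * ∫ zs, Real.exp (h zs) ∂Pn := by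
            rw [integral_mul_const]
            ring
    have hhdiff : ∀ (zs : Fin n → X) (i : Fin n) (w w' : X),
        h (Function.update zs i w) - h (Function.update zs i w') ≤ d := by
      intro zs i w w'
      have hpt : ∀ y, F (y, Function.update zs i w) - F (y, Function.update zs i w') ≤ d := by
        intro y
        have h2 := hdiff (Fin.cons y zs) i.succ w w'
        rw [← Fin.cons_update, ← Fin.cons_update] at h2
        exact h2
      have hint1 := hsecint (Function.update zs i w)
      have hint2 := hsecint (Function.update zs i w')
      have hmono := integral_mono
        (f := fun y => F (y, Function.update zs i w) - F (y, Function.update zs i w'))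
        (g := fun _ => d) (hint1.sub hint2) (integrable_const d) hpt
      rwa [integral_sub hint1 hint2, integral_const, probReal_univ,
        smul_eq_mul, one_mul] at hmono
    have hih := ih P hP h hhsm.measurable B hhb d hd hhdiff
    have hmeanheq : ∫ zs, h zs ∂Pn = ∫ xs, f xs ∂Pm := by
      rw [htrans f]
      exact (integral_prod_symm F hFint).symm
    calc ∫ xs, Real.exp (f xs) ∂Pm
        ≤ Real.exp (d ^ 2 / 8) * ∫ zs, Real.exp (h zs) ∂Pn := hstep
      _ ≤ Real.exp (d ^ 2 / 8) * Real.exp ((∫ zs, h zs ∂Pn) + n * (d ^ 2 / 8)) :=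
          mul_le_mul_of_nonneg_left hih (Real.exp_nonneg _)
      _ = Real.exp ((∫ xs, f xs ∂Pm) + (n + 1 : ℕ) * (d ^ 2 / 8)) := by
          rw [← Real.exp_add, hmeanheq]
          push_cast
          ring_nf

/-- second moment of iid sums of centered bounded Hilbert-valued maps -/
lemma sum_sq_int {X H : Type*} [MeasurableSpace X] [Nonempty X]
    [NormedAddCommGroup H] [InnerProductSpace ℝ H] [CompleteSpace H] :
    ∀ (n : ℕ) (P : Measure X) (_ : IsProbabilityMeasure P)
      (Z : X → H) (_ : StronglyMeasurable Z) (C : ℝ) (_ : ∀ x, ‖Z x‖ ≤ C)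
      (_ : ∫ x, Z x ∂P = 0),
    ∫ xs, ‖∑ i, Z (xs i)‖ ^ 2 ∂(Measure.pi fun _ : Fin n => P)
      = n * ∫ x, ‖Z x‖ ^ 2 ∂P := by
  intro n
  induction n with
  | zero =>
    intro P hP Z hZ C hC h0
    haveI := hP
    simp
  | succ n ih =>
    intro P hP Z hZ C hC h0
    haveI := hP
    have hC0 : 0 ≤ C := le_trans (norm_nonneg _) (hC (Classical.arbitrary X))
    set Pn : Measure (Fin n → X) := Measure.pi fun _ : Fin n => P with hPn
    set Pm : Measure (Fin (n+1) → X) := Measure.pi fun _ : Fin (n+1) => P with hPm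
    haveI : IsProbabilityMeasure Pn := by infer_instance
    haveI : IsProbabilityMeasure Pm := by infer_instance
    set e := MeasurableEquiv.piFinSuccAbove (fun _ : Fin (n+1) => X) 0 with he
    have hmp : MeasurePreserving e Pm (P.prod Pn) :=
      measurePreserving_piFinSuccAbove (fun _ : Fin (n+1) => P) 0
    have hcons : ∀ (y : X) (zs : Fin n → X), e.symm (y, zs) = Fin.cons y zs := by
      intro y zs
      show (Fin.insertNthEquiv (fun _ : Fin (n+1) => X) 0) (y, zs) = Fin.cons y zs
      simp [Fin.insertNthEquiv, Fin.insertNth_zero']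
    have htrans : ∀ (G : (Fin (n+1) → X) → ℝ),
        ∫ xs, G xs ∂Pm = ∫ q, G (Fin.cons q.1 q.2) ∂(P.prod Pn) := by
      intro G
      have h1 := (MeasurePreserving.symm e hmp).integral_comp e.symm.measurableEmbedding G
      rw [← h1]
      refine integral_congr_ae (Filter.Eventually.of_forall fun q => ?_)
      simp only [hcons]
    -- the sum function on n variables
    set S : (Fin n → X) → H := fun zs => ∑ i, Z (zs i) with hS
    have hSsm : StronglyMeasurable S := by
      apply Finset.stronglyMeasurable_fun_sum
      intro i _
      exact hZ.comp_measurable (measurable_pi_apply i)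
    have hSb : ∀ zs, ‖S zs‖ ≤ n * C := by
      intro zs
      calc ‖S zs‖ ≤ ∑ i : Fin n, ‖Z (zs i)‖ := norm_sum_le _ _
        _ ≤ ∑ _i : Fin n, C := Finset.sum_le_sum fun i _ => hC _
        _ = n * C := by simp [mul_comm]
    -- decompose the (n+1)-sum
    have hdec : ∀ (y : X) (zs : Fin n → X),
        (∑ i : Fin (n+1), Z ((Fin.cons y zs : Fin (n+1) → X) i)) = Z y + S zs := by
      intro y zs
      rw [Fin.sum_univ_succ]
      simp [hS]
    rw [htrans (fun xs => ‖∑ i, Z (xs i)‖ ^ 2)]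
    have hptw : ∀ q : X × (Fin n → X),
        ‖∑ i : Fin (n+1), Z ((Fin.cons q.1 q.2 : Fin (n+1) → X) i)‖ ^ 2
          = ‖Z q.1‖ ^ 2 + 2 * (inner ℝ (Z q.1) (S q.2) : ℝ) + ‖S q.2‖ ^ 2 := by
      intro q
      rw [hdec q.1 q.2, norm_add_sq_real]
    rw [integral_congr_ae (Filter.Eventually.of_forall hptw)]
    -- integrability of the three pieces
    have hZ1m : AEStronglyMeasurable (fun q : X × (Fin n → X) => ‖Z q.1‖ ^ 2) (P.prod Pn) :=
      (((hZ.comp_measurable measurable_fst).norm).pow 2).aestronglyMeasurable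
    have hZ1int : Integrable (fun q : X × (Fin n → X) => ‖Z q.1‖ ^ 2) (P.prod Pn) := by
      refine integrable_of_bound'' _ _ hZ1m (C ^ 2) fun q => ?_
      rw [Real.norm_eq_abs, abs_of_nonneg (by positivity)]
      exact pow_le_pow_left₀ (norm_nonneg _) (hC q.1) 2
    have hinnm : AEStronglyMeasurable
        (fun q : X × (Fin n → X) => 2 * (inner ℝ (Z q.1) (S q.2) : ℝ)) (P.prod Pn) := by
      exact (((hZ.comp_measurable measurable_fst).inner
        (hSsm.comp_measurable measurable_snd)).const_mul 2).aestronglyMeasurable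
    have hinnint : Integrable
        (fun q : X × (Fin n → X) => 2 * (inner ℝ (Z q.1) (S q.2) : ℝ)) (P.prod Pn) := by
      refine integrable_of_bound'' _ _ hinnm (2 * (C * (n * C))) fun q => ?_
      rw [Real.norm_eq_abs, abs_mul, abs_two]
      refine mul_le_mul_of_nonneg_left ?_ (by norm_num)
      calc |(inner ℝ (Z q.1) (S q.2) : ℝ)| ≤ ‖Z q.1‖ * ‖S q.2‖ := abs_real_inner_le_norm _ _
        _ ≤ C * (n * C) := mul_le_mul (hC _) (hSb _) (norm_nonneg _) hC0
    have hS2m : AEStronglyMeasurable (fun q : X × (Fin n → X) => ‖S q.2‖ ^ 2) (P.prod Pn) :=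
      (((hSsm.comp_measurable measurable_snd).norm).pow 2).aestronglyMeasurable
    have hS2int : Integrable (fun q : X × (Fin n → X) => ‖S q.2‖ ^ 2) (P.prod Pn) := by
      refine integrable_of_bound'' _ _ hS2m ((n * C) ^ 2) fun q => ?_
      rw [Real.norm_eq_abs, abs_of_nonneg (by positivity)]
      exact pow_le_pow_left₀ (norm_nonneg _) (hSb q.2) 2
    rw [integral_add (f := fun q : X × (Fin n → X) => ‖Z q.1‖ ^ 2 + 2 * (inner ℝ (Z q.1) (S q.2) : ℝ))
      (g := fun q : X × (Fin n → X) => ‖S q.2‖ ^ 2) (hZ1int.add hinnint) hS2int,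
      integral_add hZ1int hinnint]
    -- first piece
    have hfst : ∫ q, ‖Z q.1‖ ^ 2 ∂(P.prod Pn) = ∫ x, ‖Z x‖ ^ 2 ∂P := by
      rw [integral_prod _ hZ1int]
      simp
    -- cross term vanishes
    have hZint : Integrable Z P := integrable_of_bound'' _ _ hZ.aestronglyMeasurable C hC
    have hcross : ∫ q, 2 * (inner ℝ (Z q.1) (S q.2) : ℝ) ∂(P.prod Pn) = 0 := by
      rw [integral_prod_symm _ hinnint]
      have : ∀ zs : Fin n → X, ∫ y, 2 * (inner ℝ (Z y) (S zs) : ℝ) ∂P = 0 := by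
        intro zs
        rw [integral_const_mul]
        have hswap : ∀ y, (inner ℝ (Z y) (S zs) : ℝ) = (inner ℝ (S zs) (Z y) : ℝ) :=
          fun y => real_inner_comm _ _
        rw [integral_congr_ae (Filter.Eventually.of_forall fun y => by rw [hswap y])]
        rw [integral_inner hZint, h0, inner_zero_right, mul_zero]
      rw [integral_congr_ae (Filter.Eventually.of_forall this)]
      simp
    -- last piece
    have hlast : ∫ q, ‖S q.2‖ ^ 2 ∂(P.prod Pn) = n * ∫ x, ‖Z x‖ ^ 2 ∂P := by
      rw [integral_prod _ hS2int]
      simp only [integral_const, measure_univ, probReal_univ, one_smul]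
      exact ih P hP Z hZ C hC h0
    rw [hfst, hcross, hlast]
    push_cast
    ring

end Auxiliary

lemma arith_mcd' (k nn m g s : ℝ) (hn : nn ≠ 0) (hk : k ≠ 0) (hs : s ^ 2 = k) :
    ((g - m) * nn / k) * m
        + nn * ((((g - m) * nn / k) * (2 * s / nn)) ^ 2 / 8) - ((g - m) * nn / k) * g
      = -((g - m) ^ 2 * nn / (2 * k)) := by
  subst hs
  have hs0 : s ≠ 0 := by
    intro h
    exact hk (by rw [h]; ring)
  field_simp
  ring

/-- The robust kernel test under the Neyman–Pearson setting satisfies the worst-case false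
alarm constraint: for every `P₀` in the MMD uncertainty set `𝒫₀` of radius `θ` around `Q₀`,
the probability (under `P₀^{⊗n}`) that the empirical embedding is at MMD distance more than
`γₙ = √(2K/n)(1 + √(log(1/α)))` from `𝒫₀` is at most `α`. -/
theorem stmt5
    {X H : Type*} [MeasurableSpace X]
    [NormedAddCommGroup H] [InnerProductSpace ℝ H] [CompleteSpace H]
    (Φ : X → H) (hΦm : StronglyMeasurable Φ) (K : ℝ) (hΦb : ∀ x, ‖Φ x‖ ^ 2 ≤ K)
    (Q₀ : Measure X) [IsProbabilityMeasure Q₀]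
    (θ : ℝ) (hθ : 0 ≤ θ) (α : ℝ) (hα : α ∈ Set.Ioc (0 : ℝ) 1) :
    let μemb : Measure X → H := fun P => ∫ x, Φ x ∂P
    let 𝒫₀ : Set (Measure X) := {P | IsProbabilityMeasure P ∧ ‖μemb P - μemb Q₀‖ ≤ θ}
    ∀ n : ℕ, 0 < n → ∀ P₀ ∈ 𝒫₀,
      (Measure.pi fun _ : Fin n => P₀)
          {xs : Fin n → X |
            Real.sqrt (2 * K / n) * (1 + Real.sqrt (Real.log (1 / α)))
              < ⨅ P : ↥𝒫₀, ‖(n : ℝ)⁻¹ • ∑ i, Φ (xs i) - μemb (P : Measure X)‖}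
        ≤ ENNReal.ofReal α := by
  intro μemb 𝒫₀ n hn P₀ hP₀
  obtain ⟨hP₀prob, hP₀mmd⟩ := hP₀
  haveI := hP₀prob
  have hα0 : 0 < α := hα.1
  have hα1 : α ≤ 1 := hα.2
  -- X is nonempty
  have hXne : Nonempty X := by
    by_contra hX
    rw [not_nonempty_iff] at hX
    have h1 : P₀ Set.univ = 1 := measure_univ
    rw [Set.univ_eq_empty_iff.2 hX, measure_empty] at h1
    exact zero_ne_one h1
  haveI := hXne
  have hK0 : 0 ≤ K := le_trans (sq_nonneg _) (hΦb (Classical.arbitrary X))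
  have hn0 : (0:ℝ) < (n:ℝ) := by exact_mod_cast hn
  set L : ℝ := Real.log (1 / α) with hL
  have hL0 : 0 ≤ L := Real.log_nonneg (by rw [le_div_iff₀ hα0]; linarith)
  set μ0 : H := ∫ x, Φ x ∂P₀ with hμ0
  set γ : ℝ := Real.sqrt (2 * K / n) * (1 + Real.sqrt L) with hγ
  set f : (Fin n → X) → ℝ := fun xs => ‖(n:ℝ)⁻¹ • ∑ i, Φ (xs i) - μ0‖ with hf
  set Pm : Measure (Fin n → X) := Measure.pi fun _ : Fin n => P₀ with hPm
  haveI : IsProbabilityMeasure Pm := by infer_instance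
  haveI hne𝒫 : Nonempty ↥𝒫₀ := ⟨⟨P₀, hP₀prob, hP₀mmd⟩⟩
  -- event inclusion
  have hsub : {xs : Fin n → X |
      γ < ⨅ P : ↥𝒫₀, ‖(n : ℝ)⁻¹ • ∑ i, Φ (xs i) - μemb (P : Measure X)‖}
      ⊆ {xs : Fin n → X | γ < f xs} := by
    intro xs hxs
    simp only [Set.mem_setOf_eq] at hxs ⊢
    refine lt_of_lt_of_le hxs ?_
    exact ciInf_le ⟨0, by rintro _ ⟨P, rfl⟩; exact norm_nonneg _⟩
      (⟨P₀, hP₀prob, hP₀mmd⟩ : ↥𝒫₀)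
  refine le_trans (measure_mono hsub) ?_
  -- basic bounds
  have hΦle : ∀ x, ‖Φ x‖ ≤ Real.sqrt K := by
    intro x
    have := Real.sqrt_le_sqrt (hΦb x)
    rwa [Real.sqrt_sq (norm_nonneg _)] at this
  have hΦint : Integrable Φ P₀ :=
    integrable_of_bound'' _ _ hΦm.aestronglyMeasurable _ hΦle
  have hμle : ‖μ0‖ ≤ Real.sqrt K := by
    have := norm_integral_le_of_norm_le_const (μ := P₀) (f := Φ) (C := Real.sqrt K)
      (Filter.Eventually.of_forall hΦle)
    simpa [measure_univ] using this
  set Z : X → H := fun x => Φ x - μ0 with hZ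
  have hZsm : StronglyMeasurable Z := hΦm.sub stronglyMeasurable_const
  have hZb : ∀ x, ‖Z x‖ ≤ 2 * Real.sqrt K := by
    intro x
    calc ‖Z x‖ ≤ ‖Φ x‖ + ‖μ0‖ := norm_sub_le _ _
      _ ≤ 2 * Real.sqrt K := by linarith [hΦle x, hμle]
  have hZ0 : ∫ x, Z x ∂P₀ = 0 := by
    rw [hZ]
    rw [integral_sub hΦint (integrable_const _), integral_const]
    simp [hμ0]
  -- identity f = n⁻¹ ‖∑ Z‖
  have hfeq : ∀ xs : Fin n → X, f xs = (n:ℝ)⁻¹ * ‖∑ i, Z (xs i)‖ := by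
    intro xs
    have hsum' : (∑ i, Z (xs i)) = (∑ i, Φ (xs i)) - (n:ℝ) • μ0 := by
      rw [Finset.sum_sub_distrib]
      congr 1
      rw [Finset.sum_const, Finset.card_univ, Fintype.card_fin, ← Nat.cast_smul_eq_nsmul ℝ]
    have h1 : (n:ℝ)⁻¹ • ((∑ i, Φ (xs i)) - (n:ℝ) • μ0) = (n:ℝ)⁻¹ • (∑ i, Φ (xs i)) - μ0 := by
      rw [smul_sub, smul_smul, inv_mul_cancel₀ hn0.ne', one_smul]
    simp only [hf]
    rw [← h1, ← hsum', norm_smul, norm_inv, Real.norm_natCast]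
  -- measurability of f
  have hSsm : StronglyMeasurable fun xs : Fin n → X => ∑ i, Φ (xs i) := by
    apply Finset.stronglyMeasurable_fun_sum
    intro i _
    exact hΦm.comp_measurable (measurable_pi_apply i)
  have hfm : Measurable f := ((hSsm.const_smul ((n:ℝ)⁻¹)).sub stronglyMeasurable_const).norm.measurable
  -- bound on f
  have hfb : ∀ xs, |f xs| ≤ 2 * Real.sqrt K := by
    intro xs
    rw [abs_of_nonneg (by rw [hf]; exact norm_nonneg _), hfeq xs]
    have hSb : ‖∑ i, Z (xs i)‖ ≤ n * (2 * Real.sqrt K) := by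
      calc ‖∑ i, Z (xs i)‖ ≤ ∑ i : Fin n, ‖Z (xs i)‖ := norm_sum_le _ _
        _ ≤ ∑ _i : Fin n, 2 * Real.sqrt K := Finset.sum_le_sum fun i _ => hZb _
        _ = n * (2 * Real.sqrt K) := by simp [mul_comm]
    calc (n:ℝ)⁻¹ * ‖∑ i, Z (xs i)‖ ≤ (n:ℝ)⁻¹ * ((n:ℝ) * (2 * Real.sqrt K)) := by
          exact mul_le_mul_of_nonneg_left hSb (by positivity)
      _ = 2 * Real.sqrt K := by field_simp
  -- bounded differences
  set d : ℝ := 2 * Real.sqrt K / n with hd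
  have hd0 : 0 ≤ d := by positivity
  have hupd : ∀ (xs : Fin n → X) (i : Fin n) (y : X),
      (∑ j, Z (Function.update xs i y j)) = Z y + ∑ j ∈ Finset.univ \ {i}, Z (xs j) := by
    intro xs i y
    have hcomp : (fun j => Z (Function.update xs i y j))
        = Function.update (fun j => Z (xs j)) i (Z y) := by
      funext j
      by_cases hj : j = i
      · subst hj; simp
      · simp [Function.update_of_ne hj]
    rw [hcomp]
    exact Finset.sum_update_of_mem (f := fun j => Z (xs j)) (b := Z y) (Finset.mem_univ i)
  have hfdiff : ∀ (xs : Fin n → X) (i : Fin n) (y y' : X),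
      f (Function.update xs i y) - f (Function.update xs i y') ≤ d := by
    intro xs i y y'
    rw [hfeq, hfeq, ← mul_sub]
    have hZZ : (∑ j, Z (Function.update xs i y j)) - (∑ j, Z (Function.update xs i y' j))
        = Z y - Z y' := by
      rw [hupd, hupd]
      abel
    have h1 : ‖∑ j, Z (Function.update xs i y j)‖ - ‖∑ j, Z (Function.update xs i y' j)‖
        ≤ ‖Z y - Z y'‖ := by
      calc _ ≤ ‖(∑ j, Z (Function.update xs i y j)) - ∑ j, Z (Function.update xs i y' j)‖ :=
            norm_sub_norm_le _ _
        _ = ‖Z y - Z y'‖ := by rw [hZZ]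
    have h2 : ‖Z y - Z y'‖ ≤ 2 * Real.sqrt K := by
      have : Z y - Z y' = Φ y - Φ y' := by rw [hZ]; beta_reduce; abel
      rw [this]
      calc ‖Φ y - Φ y'‖ ≤ ‖Φ y‖ + ‖Φ y'‖ := norm_sub_le _ _
        _ ≤ 2 * Real.sqrt K := by linarith [hΦle y, hΦle y']
    calc (n:ℝ)⁻¹ * (‖∑ j, Z (Function.update xs i y j)‖ - ‖∑ j, Z (Function.update xs i y' j)‖)
        ≤ (n:ℝ)⁻¹ * (2 * Real.sqrt K) := by
          exact mul_le_mul_of_nonneg_left (h1.trans h2) (by positivity)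
      _ = d := by rw [hd]; field_simp
  -- integrability of f, f²
  have hfint : Integrable f Pm := by
    refine integrable_of_bound'' _ _ hfm.aestronglyMeasurable (2 * Real.sqrt K) fun xs => ?_
    rw [Real.norm_eq_abs]; exact hfb xs
  have hf2int : Integrable (fun xs => f xs ^ 2) Pm := by
    refine integrable_of_bound'' _ _ ((hfm.pow_const 2).aestronglyMeasurable)
      ((2 * Real.sqrt K) ^ 2) fun xs => ?_
    rw [Real.norm_eq_abs, abs_pow]
    exact pow_le_pow_left₀ (abs_nonneg _) (hfb xs) 2
  -- mean of f
  set m : ℝ := ∫ xs, f xs ∂Pm with hmdef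
  have hm0 : 0 ≤ m := integral_nonneg fun xs => by rw [hf]; exact norm_nonneg _
  -- second moment bound
  have hσle : ∫ x, ‖Z x‖ ^ 2 ∂P₀ ≤ K := by
    have hexp : ∀ x, ‖Z x‖ ^ 2 = ‖Φ x‖ ^ 2 - 2 * (inner ℝ (Φ x) μ0 : ℝ) + ‖μ0‖ ^ 2 :=
      fun x => norm_sub_sq_real _ _
    have hΦ2int : Integrable (fun x => ‖Φ x‖ ^ 2) P₀ := by
      refine integrable_of_bound'' _ _ ((hΦm.norm.measurable.pow_const 2).aestronglyMeasurable) K fun x => ?_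
      rw [Real.norm_eq_abs, abs_of_nonneg (by positivity)]
      exact hΦb x
    have hinnint : Integrable (fun x => 2 * (inner ℝ (Φ x) μ0 : ℝ)) P₀ := by
      refine integrable_of_bound'' _ _
        (((hΦm.inner stronglyMeasurable_const).const_mul 2).aestronglyMeasurable)
        (2 * (Real.sqrt K * Real.sqrt K)) fun x => ?_
      rw [Real.norm_eq_abs, abs_mul, abs_two]
      refine mul_le_mul_of_nonneg_left ?_ (by norm_num)
      calc |(inner ℝ (Φ x) μ0 : ℝ)| ≤ ‖Φ x‖ * ‖μ0‖ := abs_real_inner_le_norm _ _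
        _ ≤ Real.sqrt K * Real.sqrt K :=
            mul_le_mul (hΦle x) hμle (norm_nonneg _) (Real.sqrt_nonneg _)
    have hinn : ∫ x, 2 * (inner ℝ (Φ x) μ0 : ℝ) ∂P₀ = 2 * ‖μ0‖ ^ 2 := by
      rw [integral_const_mul]
      congr 1
      have hswap : (∫ x, (inner ℝ (Φ x) μ0 : ℝ) ∂P₀) = ∫ x, (inner ℝ μ0 (Φ x) : ℝ) ∂P₀ :=
        integral_congr_ae (Filter.Eventually.of_forall fun x => real_inner_comm μ0 (Φ x))
      rw [hswap, integral_inner hΦint, ← hμ0]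
      exact real_inner_self_eq_norm_sq μ0
    rw [integral_congr_ae (Filter.Eventually.of_forall hexp)]
    rw [integral_add (f := fun x => ‖Φ x‖ ^ 2 - 2 * (inner ℝ (Φ x) μ0 : ℝ)) (g := fun _ => ‖μ0‖ ^ 2)
      (hΦ2int.sub hinnint) (integrable_const _), integral_sub hΦ2int hinnint, hinn, integral_const]
    simp only [measure_univ, probReal_univ, smul_eq_mul, one_mul]
    have hΦ2le : ∫ x, ‖Φ x‖ ^ 2 ∂P₀ ≤ K := by
      have := integral_mono hΦ2int (integrable_const K) hΦb
      simpa [measure_univ] using this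
    nlinarith [sq_nonneg ‖μ0‖]
  -- E f ≤ √(K/n)
  have hmle : m ≤ Real.sqrt (K / n) := by
    have hEf2 : ∫ xs, f xs ^ 2 ∂Pm ≤ K / n := by
      have heq : ∀ xs : Fin n → X, f xs ^ 2 = (n:ℝ)⁻¹ ^ 2 * ‖∑ i, Z (xs i)‖ ^ 2 := by
        intro xs
        rw [hfeq xs, mul_pow]
      rw [integral_congr_ae (Filter.Eventually.of_forall heq), integral_const_mul]
      rw [sum_sq_int n P₀ hP₀prob Z hZsm (2 * Real.sqrt K) hZb hZ0]
      have h1 : (n:ℝ)⁻¹ ^ 2 * ((n:ℝ) * ∫ x, ‖Z x‖ ^ 2 ∂P₀) = (∫ x, ‖Z x‖ ^ 2 ∂P₀) / n := by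
        field_simp
      rw [h1]
      exact (div_le_div_iff_of_pos_right hn0).2 hσle
    have hm2 : m ^ 2 ≤ K / n := le_trans (sq_int_le Pm f hfint hf2int) hEf2
    calc m = Real.sqrt (m ^ 2) := (Real.sqrt_sq hm0).symm
      _ ≤ Real.sqrt (K / n) := Real.sqrt_le_sqrt hm2
  -- case α = 1
  rcases eq_or_lt_of_le hα1 with hα1' | hαlt
  · calc Pm {xs | γ < f xs} ≤ 1 := prob_le_one
      _ = ENNReal.ofReal α := by rw [hα1']; simp
  -- case K = 0
  rcases eq_or_lt_of_le hK0 with hK0' | hKpos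
  · have hΦ0 : ∀ x, Φ x = 0 := by
      intro x
      have h1 := hΦb x
      rw [← hK0'] at h1
      have h2 : ‖Φ x‖ = 0 := by nlinarith [norm_nonneg (Φ x)]
      exact norm_eq_zero.1 h2
    have hμ00 : μ0 = 0 := by rw [hμ0]; simp [hΦ0]
    have hfz : ∀ xs, f xs = 0 := by
      intro xs
      simp only [hf]
      simp [hΦ0, hμ00]
    have hγ0 : γ = 0 := by rw [hγ, ← hK0']; simp
    have hempty : {xs : Fin n → X | γ < f xs} = ∅ := by
      ext xs
      simp [hfz, hγ0]
    rw [hempty, measure_empty]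
    exact zero_le
  -- main case: 0 < K, α < 1
  have hLpos : 0 < L := Real.log_pos (by rw [lt_div_iff₀ hα0]; linarith)
  have hsq2K : 0 < Real.sqrt (2 * K / n) := Real.sqrt_pos.2 (by positivity)
  set t : ℝ := γ - m with ht
  have htlb : Real.sqrt (2 * K / n) * Real.sqrt L ≤ t := by
    have h1 : m ≤ Real.sqrt (2 * K / n) := by
      refine hmle.trans (Real.sqrt_le_sqrt ?_)
      exact (div_le_div_iff_of_pos_right hn0).2 (by linarith)
    have h2 : γ = Real.sqrt (2 * K / n) + Real.sqrt (2 * K / n) * Real.sqrt L := by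
      rw [hγ]; ring
    rw [ht, h2]
    linarith
  have htpos : 0 < t :=
    lt_of_lt_of_le (mul_pos hsq2K (Real.sqrt_pos.2 hLpos)) htlb
  set lam : ℝ := t * n / K with hlam
  have hlampos : 0 < lam := by positivity
  -- MGF bound via McDiarmid
  have hmgf := mcdiarmid_mgf n P₀ hP₀prob (fun xs => lam * f xs) (hfm.const_mul lam)
    (lam * (2 * Real.sqrt K))
    (fun xs => by
      rw [abs_mul, abs_of_pos hlampos]
      exact mul_le_mul_of_nonneg_left (hfb xs) hlampos.le)
    (lam * d) (by positivity)
    (fun xs i y y' => by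
      have hdd := hfdiff xs i y y'
      have : lam * f (Function.update xs i y) - lam * f (Function.update xs i y')
          = lam * (f (Function.update xs i y) - f (Function.update xs i y')) := by ring
      rw [this]
      exact mul_le_mul_of_nonneg_left hdd hlampos.le)
  have hintf : ∫ xs, lam * f xs ∂Pm = lam * m := by
    rw [integral_const_mul, hmdef]
  rw [hintf] at hmgf
  -- Markov's inequality
  have hexpint : Integrable (fun xs => Real.exp (lam * f xs)) Pm := by
    refine integrable_of_bound'' _ _
      ((Real.continuous_exp.measurable.comp (hfm.const_mul lam)).aestronglyMeasurable)
      (Real.exp (lam * (2 * Real.sqrt K))) fun xs => ?_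
    rw [Real.norm_eq_abs, abs_of_pos (Real.exp_pos _)]
    exact Real.exp_le_exp.2
      (mul_le_mul_of_nonneg_left (le_trans (le_abs_self _) (hfb xs)) hlampos.le)
  have hmarkov := mul_meas_ge_le_integral_of_nonneg (μ := Pm)
    (f := fun xs => Real.exp (lam * f xs))
    (Filter.Eventually.of_forall fun xs => (Real.exp_pos _).le) hexpint (Real.exp (lam * γ))
  have hsub2 : {xs : Fin n → X | γ < f xs}
      ⊆ {xs : Fin n → X | Real.exp (lam * γ) ≤ Real.exp (lam * f xs)} := by
    intro xs hxs
    simp only [Set.mem_setOf_eq] at hxs ⊢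
    exact Real.exp_le_exp.2 (mul_le_mul_of_nonneg_left hxs.le hlampos.le)
  have hfin1 : Pm {xs : Fin n → X | γ < f xs} ≠ ⊤ := measure_ne_top _ _
  have hfin2 : Pm {xs : Fin n → X | Real.exp (lam * γ) ≤ Real.exp (lam * f xs)} ≠ ⊤ :=
    measure_ne_top _ _
  have hstep1 : (Pm {xs : Fin n → X | γ < f xs}).toReal
      ≤ (Pm {xs : Fin n → X | Real.exp (lam * γ) ≤ Real.exp (lam * f xs)}).toReal :=
    (ENNReal.toReal_le_toReal hfin1 hfin2).2 (measure_mono hsub2)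
  have hstep2 : (Pm {xs : Fin n → X | Real.exp (lam * γ) ≤ Real.exp (lam * f xs)}).toReal
      ≤ Real.exp (lam * m + n * ((lam * d) ^ 2 / 8)) / Real.exp (lam * γ) := by
    rw [le_div_iff₀ (Real.exp_pos _)]
    calc (Pm {xs : Fin n → X | Real.exp (lam * γ) ≤ Real.exp (lam * f xs)}).toReal
          * Real.exp (lam * γ)
        = Real.exp (lam * γ)
          * (Pm {xs : Fin n → X | Real.exp (lam * γ) ≤ Real.exp (lam * f xs)}).toReal :=
          mul_comm _ _
      _ ≤ ∫ xs, Real.exp (lam * f xs) ∂Pm := hmarkov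
      _ ≤ Real.exp (lam * m + n * ((lam * d) ^ 2 / 8)) := hmgf
  have hexp_le : Real.exp (lam * m + n * ((lam * d) ^ 2 / 8)) / Real.exp (lam * γ) ≤ α := by
    clear_value m t lam γ L d f Z μ0 Pm
    rw [← Real.exp_sub]
    have h34 : lam * m + (n:ℝ) * ((lam * d) ^ 2 / 8) - lam * γ = -(t ^ 2 * n / (2 * K)) := by
      rw [hlam, hd, ht]
      exact arith_mcd' K n m γ (Real.sqrt K) hn0.ne' hKpos.ne' (Real.sq_sqrt hK0)
    have hsqrtmul : Real.sqrt (2 * K / n) * Real.sqrt L = Real.sqrt (2 * K / n * L) :=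
      (Real.sqrt_mul (by positivity) L).symm
    have ht2 : 2 * K / n * L ≤ t ^ 2 := by
      have hnn : 0 ≤ 2 * K / n * L := by positivity
      have h6 : Real.sqrt (2 * K / n * L) ≤ t := by rw [← hsqrtmul]; exact htlb
      calc 2 * K / n * L = Real.sqrt (2 * K / n * L) ^ 2 := (Real.sq_sqrt hnn).symm
        _ ≤ t ^ 2 := pow_le_pow_left₀ (Real.sqrt_nonneg _) h6 2
    have hexpo : -(t ^ 2 * n / (2 * K)) ≤ -L := by
      rw [neg_le_neg_iff, le_div_iff₀ (by positivity)]
      have h7 : (2 * K / n * L) * n ≤ t ^ 2 * n := mul_le_mul_of_nonneg_right ht2 hn0.le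
      have h8 : (2 * K / n * L) * n = L * (2 * K) := by
        rw [div_mul_eq_mul_div, div_mul_eq_mul_div, div_eq_iff hn0.ne']
        ring
      exact le_of_eq_of_le h8.symm h7
    calc Real.exp (lam * m + n * ((lam * d) ^ 2 / 8) - lam * γ)
        ≤ Real.exp (-L) := Real.exp_le_exp.2 (by rw [h34]; exact hexpo)
      _ = α := by rw [hL, one_div, Real.log_inv, neg_neg, Real.exp_log hα0]
  have hfinal : (Pm {xs : Fin n → X | γ < f xs}).toReal ≤ α :=
    le_trans hstep1 (le_trans hstep2 hexp_le)
  exact (ENNReal.le_ofReal_iff_toReal_le hfin1 hα0.le).2 hfinal
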